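/- The covariance of the scaled area and the scaled perimeter satisfies Cov(A_m, P_m) = (1/m²)·p(1−p)·( 4m²(1 − 2p) + 8mp ). -/

import Mathlib

open MeasureTheory ProbabilityTheory Finset Filter

noncomputable section

/-- The scaled total area `A_{m} = (1/m) ∑_{i,j=1}^m Z_{i,j}` of a binary image `Z`. -/
def areaSum (m : ℕ) (Z : ℕ → ℕ → ℝ) : ℝ :=
  (1 / (m : ℝ)) * ∑ i ∈ Finset.Icc 1 m, ∑ j ∈ Finset.Icc 1 m, Z i j

/-- The scaled perimeter `P_{m} = (1/m) ∑_{i,j=1}^m ψ(i,j)` of a binary image `Z`,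
where `ψ(i,j) = 0` if `Z i j = 0` and `ψ(i,j) = 4 - (Z (i-1) j + Z (i+1) j + Z i (j-1) + Z i (j+1))`
if `Z i j = 1`. -/
def perimSum (m : ℕ) (Z : ℕ → ℕ → ℝ) : ℝ :=
  (1 / (m : ℝ)) * ∑ i ∈ Finset.Icc 1 m, ∑ j ∈ Finset.Icc 1 m,
    (if Z i j = 1 then 4 - (Z (i - 1) j + Z (i + 1) j + Z i (j - 1) + Z i (j + 1)) else 0)

/-- The scaled Euler characteristic `χ_{m} = (1/m) ∑_{i,j=1}^m W_{i,j}` of a binary image `Z`,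
where, with `S = Z i j + Z (i+1) j + Z i (j+1) + Z (i+1) (j+1)`: `W = 1/4` if `S = 1`;
`W = -1/4` if `S = 3`; `W = -1/2` if `S = 2` and one of the two diagonal products is `1`;
and `W = 0` otherwise. -/
def eulerSum (m : ℕ) (Z : ℕ → ℕ → ℝ) : ℝ :=
  (1 / (m : ℝ)) * ∑ i ∈ Finset.Icc 1 m, ∑ j ∈ Finset.Icc 1 m,
    (if Z i j + Z (i + 1) j + Z i (j + 1) + Z (i + 1) (j + 1) = 1 then (1 / 4 : ℝ)
      else if Z i j + Z (i + 1) j + Z i (j + 1) + Z (i + 1) (j + 1) = 3 then -(1 / 4)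
      else if Z i j + Z (i + 1) j + Z i (j + 1) + Z (i + 1) (j + 1) = 2 ∧
          (Z i j * Z (i + 1) (j + 1) = 1 ∨ Z (i + 1) j * Z i (j + 1) = 1) then -(1 / 2)
      else 0)

/-- Under CSR, the covariance of the scaled area and the scaled perimeter is
`Cov(A_m, P_m) = (1/m²) p(1-p) (4m²(1 - 2p) + 8mp)`. -/
theorem covariance_area_perimeter
    {Ω : Type*} [MeasureSpace Ω] [IsProbabilityMeasure (ℙ : Measure Ω)]
    (m : ℕ) (hm : 3 ≤ m) (p : ℝ) (hp0 : 0 ≤ p) (hp1 : p ≤ 1)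
    (Z : ℕ → ℕ → Ω → ℝ)
    (hmeas : ∀ i j, Measurable (Z i j))
    (hzero : ∀ i j, (i = 0 ∨ i = m + 1 ∨ j = 0 ∨ j = m + 1) → ∀ ω, Z i j ω = 0)
    (hone : ∀ i ∈ Finset.Icc 1 m, ∀ j ∈ Finset.Icc 1 m,
      ℙ {ω | Z i j ω = 1} = ENNReal.ofReal p)
    (hzeroP : ∀ i ∈ Finset.Icc 1 m, ∀ j ∈ Finset.Icc 1 m,
      ℙ {ω | Z i j ω = 0} = ENNReal.ofReal (1 - p))
    (hind : iIndepFun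
      (fun q : (Finset.Icc 1 m ×ˢ Finset.Icc 1 m : Finset (ℕ × ℕ)) => Z q.1.1 q.1.2) ℙ) :
    ∫ ω, (areaSum m (fun i j => Z i j ω) - ∫ ω', areaSum m (fun i j => Z i j ω') ∂ℙ) *
        (perimSum m (fun i j => Z i j ω) - ∫ ω', perimSum m (fun i j => Z i j ω') ∂ℙ) ∂ℙ =
      (1 / (m : ℝ) ^ 2) * (p * (1 - p)) *
        (4 * (m : ℝ) ^ 2 * (1 - 2 * p) + 8 * (m : ℝ) * p) := by
  
  classical
  set t : Finset (ℕ × ℕ) := Finset.Icc 1 m ×ˢ Finset.Icc 1 m with ht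
  set A : ℕ × ℕ → Set Ω := fun q => {ω | Z q.1 q.2 ω = 1} with hA
  set X : ℕ × ℕ → Ω → ℝ := fun q => (A q).indicator 1 with hX
  have hmem : ∀ i j : ℕ, ((i, j) ∈ t) ↔ (1 ≤ i ∧ i ≤ m ∧ 1 ≤ j ∧ j ≤ m) := by
    intro i j
    simp [ht, Finset.mem_product, Finset.mem_Icc, and_assoc]
  have hAmeas : ∀ q : ℕ × ℕ, MeasurableSet (A q) := fun q =>
    hmeas q.1 q.2 (measurableSet_singleton 1)
  have hXval : ∀ (q : ℕ × ℕ) ω, X q ω = 0 ∨ X q ω = 1 := by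
    intro q ω
    by_cases h : ω ∈ A q <;> simp [hX, Set.indicator_apply, h]
  have hXmeas : ∀ q : ℕ × ℕ, Measurable (X q) := fun q =>
    measurable_const.indicator (hAmeas q)
  have hXbd : ∀ q : ℕ × ℕ, (q.1 = 0 ∨ q.1 = m + 1 ∨ q.2 = 0 ∨ q.2 = m + 1) →
      ∀ ω, X q ω = 0 := by
    intro q hq ω
    have h0 := hzero q.1 q.2 hq ω
    simp [hX, hA, Set.indicator_apply, h0]
  have hcard : (t.card : ℝ) = (m : ℝ) ^ 2 := by
    simp [ht, Nat.card_Icc]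
    ring
  -- probability facts
  have hP1 : ∀ q ∈ t, ℙ (A q) = ENNReal.ofReal p := by
    rintro ⟨i, j⟩ hq
    rw [hmem] at hq
    exact hone i (Finset.mem_Icc.2 ⟨hq.1, hq.2.1⟩) j (Finset.mem_Icc.2 ⟨hq.2.2.1, hq.2.2.2⟩)
  have hcomap : ∀ x : t, MeasurableSet[MeasurableSpace.comap (Z x.1.1 x.1.2) inferInstance]
      (A x.1) := fun x => ⟨{1}, measurableSet_singleton 1, rfl⟩
  have hP2 : ∀ q ∈ t, ∀ r ∈ t, q ≠ r →
      ℙ (A q ∩ A r) = ENNReal.ofReal p * ENNReal.ofReal p := by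
    intro q hq r hr hne
    have hab : (⟨q, hq⟩ : t) ≠ ⟨r, hr⟩ := fun h => hne (congrArg Subtype.val h)
    have h := hind.meas_biInter (S := {(⟨q, hq⟩ : t), ⟨r, hr⟩}) (s := fun x => A x.1)
      (fun x _ => hcomap x)
    rw [Finset.set_biInter_insert, Finset.set_biInter_singleton,
      Finset.prod_insert (by simpa using hab), Finset.prod_singleton] at h
    rw [h, hP1 q hq, hP1 r hr]
  have hP3 : ∀ q ∈ t, ∀ r ∈ t, ∀ s ∈ t, q ≠ r → q ≠ s → r ≠ s →
      ℙ (A q ∩ (A r ∩ A s)) = ENNReal.ofReal p * (ENNReal.ofReal p * ENNReal.ofReal p) := by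
    intro q hq r hr s hs hqr hqs hrs
    have hab : (⟨q, hq⟩ : t) ≠ ⟨r, hr⟩ := fun h => hqr (congrArg Subtype.val h)
    have hac : (⟨q, hq⟩ : t) ≠ ⟨s, hs⟩ := fun h => hqs (congrArg Subtype.val h)
    have hbc : (⟨r, hr⟩ : t) ≠ ⟨s, hs⟩ := fun h => hrs (congrArg Subtype.val h)
    have h := hind.meas_biInter (S := {(⟨q, hq⟩ : t), ⟨r, hr⟩, ⟨s, hs⟩}) (s := fun x => A x.1)
      (fun x _ => hcomap x)
    rw [Finset.set_biInter_insert, Finset.set_biInter_insert, Finset.set_biInter_singleton,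
      Finset.prod_insert (by simp [hab, hac]), Finset.prod_insert (by simpa using hbc),
      Finset.prod_singleton] at h
    rw [h, hP1 q hq, hP1 r hr, hP1 s hs]
  -- integral facts
  have hI1 : ∀ q ∈ t, ∫ ω, X q ω = p := by
    intro q hq
    rw [hX]
    rw [integral_indicator_one (hAmeas q), measureReal_def, hP1 q hq, ENNReal.toReal_ofReal hp0]
  have hI2 : ∀ q ∈ t, ∀ r ∈ t, q ≠ r → ∫ ω, X q ω * X r ω = p ^ 2 := by
    intro q hq r hr hne
    have heq : ∀ ω, X q ω * X r ω = (A q ∩ A r).indicator 1 ω := by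
      intro ω
      rw [Set.inter_indicator_one]
      rfl
    rw [integral_congr_ae (Filter.Eventually.of_forall heq),
      integral_indicator_one ((hAmeas q).inter (hAmeas r)), measureReal_def, hP2 q hq r hr hne,
      ← ENNReal.ofReal_mul hp0, ENNReal.toReal_ofReal (by positivity)]
    ring
  have hI3 : ∀ q ∈ t, ∀ r ∈ t, ∀ s ∈ t, q ≠ r → q ≠ s → r ≠ s →
      ∫ ω, X q ω * (X r ω * X s ω) = p ^ 3 := by
    intro q hq r hr s hs hqr hqs hrs
    have heq : ∀ ω, X q ω * (X r ω * X s ω) = (A q ∩ (A r ∩ A s)).indicator 1 ω := by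
      intro ω
      rw [Set.inter_indicator_one, Set.inter_indicator_one]
      rfl
    rw [integral_congr_ae (Filter.Eventually.of_forall heq),
      integral_indicator_one ((hAmeas q).inter ((hAmeas r).inter (hAmeas s))), measureReal_def,
      hP3 q hq r hr s hs hqr hqs hrs, ← ENNReal.ofReal_mul hp0, ← ENNReal.ofReal_mul hp0,
      ENNReal.toReal_ofReal (by positivity)]
    ring
  -- a.e. equality of Z and X
  have haeq1 : ∀ q ∈ t, ∀ᵐ ω ∂ℙ, Z q.1 q.2 ω = X q ω := by
    rintro ⟨i, j⟩ hq
    have hq' := (hmem i j).1 hq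
    have hZ1 : ℙ {ω | Z i j ω = 1} = ENNReal.ofReal p :=
      hone i (Finset.mem_Icc.2 ⟨hq'.1, hq'.2.1⟩) j (Finset.mem_Icc.2 ⟨hq'.2.2.1, hq'.2.2.2⟩)
    have hZ0 : ℙ {ω | Z i j ω = 0} = ENNReal.ofReal (1 - p) :=
      hzeroP i (Finset.mem_Icc.2 ⟨hq'.1, hq'.2.1⟩) j (Finset.mem_Icc.2 ⟨hq'.2.2.1, hq'.2.2.2⟩)
    have h0meas : MeasurableSet {ω | Z i j ω = 0} := hmeas i j (measurableSet_singleton 0)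
    have hdis : Disjoint {ω | Z i j ω = 0} (A (i, j)) := by
      rw [Set.disjoint_left]
      intro ω h0 h1
      have h0' : Z i j ω = 0 := h0
      have h1' : Z i j ω = 1 := h1
      exact zero_ne_one (h0'.symm.trans h1')
    have hU : ℙ ({ω | Z i j ω = 0} ∪ A (i, j)) = 1 := by
      rw [measure_union hdis (hAmeas (i, j)), hZ0]
      have : ℙ (A (i, j)) = ENNReal.ofReal p := hZ1
      rw [this, ← ENNReal.ofReal_add (by linarith) hp0]
      norm_num
    have hae : ∀ᵐ ω ∂ℙ, ω ∈ ({ω | Z i j ω = 0} ∪ A (i, j)) := by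
      rw [ae_iff]
      have hcompl : ℙ ({ω | Z i j ω = 0} ∪ A (i, j))ᶜ = 0 := by
        rw [measure_compl (h0meas.union (hAmeas (i, j))) (measure_ne_top _ _), measure_univ, hU,
          tsub_self]
      exact hcompl
    refine hae.mono fun ω hω => ?_
    rcases hω with h0 | h1
    · have h0' : Z i j ω = 0 := h0
      have : ω ∉ A (i, j) := by
        intro h1
        have h1' : Z i j ω = 1 := h1
        exact zero_ne_one (h0'.symm.trans h1')
      simp [hX, Set.indicator_apply, this, h0']
    · have h1' : Z i j ω = 1 := h1
      simp [hX, Set.indicator_apply, h1, h1']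
  have haeq : ∀ᵐ ω ∂ℙ, ∀ q ∈ t, Z q.1 q.2 ω = X q ω := by
    rw [eventually_all_finset]
    exact haeq1
  have haeq2 : ∀ᵐ ω ∂ℙ, ∀ i j : ℕ, i ≤ m + 1 → j ≤ m + 1 → Z i j ω = X (i, j) ω := by
    refine haeq.mono fun ω h i j hi hj => ?_
    by_cases hb : i = 0 ∨ i = m + 1 ∨ j = 0 ∨ j = m + 1
    · rw [hzero i j hb ω, hXbd (i, j) hb ω]
    · push_neg at hb
      exact h (i, j) ((hmem i j).2 (by omega))
  -- S and T
  set S : Ω → ℝ := fun ω => ∑ q ∈ t, X q ω with hS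
  set T : Ω → ℝ := fun ω => ∑ q ∈ t, X q ω *
    (X (q.1 - 1, q.2) ω + X (q.1 + 1, q.2) ω + X (q.1, q.2 - 1) ω + X (q.1, q.2 + 1) ω) with hT
  have hX01 : ∀ (q : ℕ × ℕ) ω, 0 ≤ X q ω ∧ X q ω ≤ 1 := by
    intro q ω
    rcases hXval q ω with h | h <;> rw [h] <;> norm_num
  -- integrability helper
  have hbdint : ∀ (f : Ω → ℝ) (c : ℝ), Measurable f → (∀ ω, |f ω| ≤ c) →
      Integrable f ℙ := by
    intro f c hf hc
    exact (integrable_const c).mono' hf.aestronglyMeasurable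
      (Filter.Eventually.of_forall fun ω => by simpa [Real.norm_eq_abs] using hc ω)
  have hXint : ∀ q : ℕ × ℕ, Integrable (X q) ℙ := by
    intro q
    refine hbdint (X q) 1 (hXmeas q) fun ω => ?_
    rw [abs_le]
    exact ⟨by linarith [(hX01 q ω).1], (hX01 q ω).2⟩
  have hInt2 : ∀ q r : ℕ × ℕ, Integrable (fun ω => X q ω * X r ω) ℙ := by
    intro q r
    refine hbdint _ 1 ((hXmeas q).mul (hXmeas r)) fun ω => ?_
    rw [abs_mul]
    calc |X q ω| * |X r ω| ≤ 1 * 1 := by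
          refine mul_le_mul ?_ ?_ (abs_nonneg _) zero_le_one <;>
            rw [abs_le] <;> constructor <;>
              first
                | linarith [(hX01 q ω).1, (hX01 q ω).2]
                | linarith [(hX01 r ω).1, (hX01 r ω).2]
      _ = 1 := by norm_num
  have hXabs : ∀ (q : ℕ × ℕ) ω, |X q ω| ≤ 1 := by
    intro q ω
    rw [abs_le]
    exact ⟨by linarith [(hX01 q ω).1], (hX01 q ω).2⟩
  have hnbabs : ∀ (q : ℕ × ℕ) ω,
      |X q ω * (X (q.1 - 1, q.2) ω + X (q.1 + 1, q.2) ω + X (q.1, q.2 - 1) ω +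
        X (q.1, q.2 + 1) ω)| ≤ 4 := by
    intro q ω
    obtain ⟨h1, h1'⟩ := hX01 q ω
    obtain ⟨h2, h2'⟩ := hX01 (q.1 - 1, q.2) ω
    obtain ⟨h3, h3'⟩ := hX01 (q.1 + 1, q.2) ω
    obtain ⟨h4, h4'⟩ := hX01 (q.1, q.2 - 1) ω
    obtain ⟨h5, h5'⟩ := hX01 (q.1, q.2 + 1) ω
    rw [abs_le]
    constructor <;> nlinarith
  have htermint : ∀ q : ℕ × ℕ, Integrable (fun ω => X q ω *
      (X (q.1 - 1, q.2) ω + X (q.1 + 1, q.2) ω + X (q.1, q.2 - 1) ω + X (q.1, q.2 + 1) ω)) ℙ := by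
    intro q
    exact hbdint _ 4 ((hXmeas q).mul ((((hXmeas _).add (hXmeas _)).add (hXmeas _)).add
      (hXmeas _))) (hnbabs q)
  have hSmeas : Measurable S := by
    rw [hS]; exact Finset.measurable_sum t fun q _ => hXmeas q
  have hTmeas : Measurable T := by
    rw [hT]
    exact Finset.measurable_sum t fun q _ => (hXmeas q).mul ((((hXmeas _).add (hXmeas _)).add
      (hXmeas _)).add (hXmeas _))
  have hSabs : ∀ ω, |S ω| ≤ (t.card : ℝ) := by
    intro ω
    rw [abs_le]
    constructor
    · have h0 : (0 : ℝ) ≤ S ω := Finset.sum_nonneg fun q _ => (hX01 q ω).1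
      have : (0 : ℝ) ≤ (t.card : ℝ) := Nat.cast_nonneg _
      linarith
    · calc S ω ≤ ∑ _q ∈ t, (1 : ℝ) := Finset.sum_le_sum fun q _ => (hX01 q ω).2
        _ = (t.card : ℝ) := by simp
  have hTabs : ∀ ω, |T ω| ≤ (t.card : ℝ) * 4 := by
    intro ω
    calc |T ω| ≤ ∑ q ∈ t, |X q ω * (X (q.1 - 1, q.2) ω + X (q.1 + 1, q.2) ω +
        X (q.1, q.2 - 1) ω + X (q.1, q.2 + 1) ω)| := Finset.abs_sum_le_sum_abs _ _
      _ ≤ ∑ _q ∈ t, (4 : ℝ) := Finset.sum_le_sum fun q _ => hnbabs q ω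
      _ = (t.card : ℝ) * 4 := by simp [mul_comm]
  have hSint : Integrable S ℙ := hbdint S _ hSmeas hSabs
  have hTint : Integrable T ℙ := hbdint T _ hTmeas hTabs
  have hSSint : Integrable (fun ω => S ω * S ω) ℙ := by
    refine hbdint _ ((t.card : ℝ) * (t.card : ℝ)) (hSmeas.mul hSmeas) fun ω => ?_
    rw [abs_mul]
    exact mul_le_mul (hSabs ω) (hSabs ω) (abs_nonneg _) (Nat.cast_nonneg _)
  have hSTint : Integrable (fun ω => S ω * T ω) ℙ := by
    refine hbdint _ ((t.card : ℝ) * ((t.card : ℝ) * 4)) (hSmeas.mul hTmeas) fun ω => ?_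
    rw [abs_mul]
    exact mul_le_mul (hSabs ω) (hTabs ω) (abs_nonneg _) (Nat.cast_nonneg _)
  have hSterm_int : ∀ q : ℕ × ℕ, Integrable (fun ω => S ω * (X q ω *
      (X (q.1 - 1, q.2) ω + X (q.1 + 1, q.2) ω + X (q.1, q.2 - 1) ω + X (q.1, q.2 + 1) ω))) ℙ := by
    intro q
    refine hbdint _ ((t.card : ℝ) * 4) (hSmeas.mul ((hXmeas q).mul ((((hXmeas _).add
      (hXmeas _)).add (hXmeas _)).add (hXmeas _)))) fun ω => ?_
    rw [abs_mul]
    exact mul_le_mul (hSabs ω) (hnbabs q ω) (abs_nonneg _) (Nat.cast_nonneg _)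
  have hInt3 : ∀ q r s : ℕ × ℕ, Integrable (fun ω => X q ω * (X r ω * X s ω)) ℙ := by
    intro q r s
    refine hbdint _ 1 ((hXmeas q).mul ((hXmeas r).mul (hXmeas s))) fun ω => ?_
    rw [abs_mul, abs_mul]
    calc |X q ω| * (|X r ω| * |X s ω|) ≤ 1 * (1 * 1) := by
          refine mul_le_mul (hXabs q ω) ?_ (by positivity) zero_le_one
          exact mul_le_mul (hXabs r ω) (hXabs s ω) (abs_nonneg _) zero_le_one
      _ = 1 := by norm_num
  -- counting lemma
  have hfilter : ∀ v : ℝ, ∀ P : ℕ → Prop, ∀ _ : DecidablePred P, ∀ a b : ℕ,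
      (∀ i, i ∈ Finset.Icc 1 m → (P i ↔ i ∈ Finset.Icc a b)) →
      ∑ i ∈ Finset.Icc 1 m, (if P i then v else 0) =
        ((Finset.Icc a b ∩ Finset.Icc 1 m).card : ℝ) * v := by
    intro v P _ a b hPi
    rw [← Finset.sum_filter]
    have : Finset.filter P (Finset.Icc 1 m) = Finset.Icc a b ∩ Finset.Icc 1 m := by
      ext i
      simp only [Finset.mem_filter, Finset.mem_inter]
      constructor
      · rintro ⟨h1, h2⟩
        exact ⟨(hPi i h1).1 h2, h1⟩
      · rintro ⟨h1, h2⟩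
        exact ⟨h2, (hPi i h2).2 h1⟩
    rw [this, Finset.sum_const, nsmul_eq_mul]
  have hcastm1 : ((m - 1 : ℕ) : ℝ) = (m : ℝ) - 1 := by
    rw [Nat.cast_sub (show 1 ≤ m by omega)]
    norm_num
  have hsum2le : ∀ v : ℝ, ∑ i ∈ Finset.Icc 1 m, (if 2 ≤ i then v else 0) = ((m : ℝ) - 1) * v := by
    intro v
    rw [hfilter v (fun i => 2 ≤ i) inferInstance 2 m
      (by intro i hi; rw [Finset.mem_Icc] at *; omega)]
    congr 1
    have h2 : Finset.Icc 2 m ∩ Finset.Icc 1 m = Finset.Icc 2 m := by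
      ext i; simp only [Finset.mem_inter, Finset.mem_Icc]; omega
    rw [h2, Nat.card_Icc, show m + 1 - 2 = m - 1 from by omega, hcastm1]
  have hsumlt : ∀ v : ℝ, ∑ i ∈ Finset.Icc 1 m, (if i + 1 ≤ m then v else 0) =
      ((m : ℝ) - 1) * v := by
    intro v
    rw [hfilter v (fun i => i + 1 ≤ m) inferInstance 1 (m - 1)
      (by intro i hi; rw [Finset.mem_Icc] at *; omega)]
    congr 1
    have h2 : Finset.Icc 1 (m - 1) ∩ Finset.Icc 1 m = Finset.Icc 1 (m - 1) := by
      ext i; simp only [Finset.mem_inter, Finset.mem_Icc]; omega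
    rw [h2, Nat.card_Icc, show m - 1 + 1 - 1 = m - 1 from by omega, hcastm1]
  have hconstsum : ∀ v : ℝ, ∑ _i ∈ Finset.Icc 1 m, v = (m : ℝ) * v := by
    intro v
    rw [Finset.sum_const, nsmul_eq_mul, Nat.card_Icc]
    norm_num
  have hcount : ∀ v : ℝ, (∑ q ∈ t, ((if (q.1 - 1, q.2) ∈ t then v else 0) +
      (if (q.1 + 1, q.2) ∈ t then v else 0) + (if (q.1, q.2 - 1) ∈ t then v else 0) +
      (if (q.1, q.2 + 1) ∈ t then v else 0))) = 4 * (m : ℝ) * ((m : ℝ) - 1) * v := by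
    intro v
    rw [ht, Finset.sum_product]
    have hterm : ∀ i ∈ Finset.Icc 1 m, ∀ j ∈ Finset.Icc 1 m,
        ((if ((i, j).1 - 1, (i, j).2) ∈ t then v else 0) +
        (if ((i, j).1 + 1, (i, j).2) ∈ t then v else 0) +
        (if ((i, j).1, (i, j).2 - 1) ∈ t then v else 0) +
        (if ((i, j).1, (i, j).2 + 1) ∈ t then v else 0)) =
        ((if 2 ≤ i then v else 0) + (if i + 1 ≤ m then v else 0) +
         (if 2 ≤ j then v else 0) + (if j + 1 ≤ m then v else 0)) := by
      intro i hi j hj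
      rw [Finset.mem_Icc] at hi hj
      have e1 : ((i - 1, j) ∈ t) ↔ 2 ≤ i := by rw [hmem]; omega
      have e2 : ((i + 1, j) ∈ t) ↔ i + 1 ≤ m := by rw [hmem]; omega
      have e3 : ((i, j - 1) ∈ t) ↔ 2 ≤ j := by rw [hmem]; omega
      have e4 : ((i, j + 1) ∈ t) ↔ j + 1 ≤ m := by rw [hmem]; omega
      simp only [e1, e2, e3, e4]
    calc ∑ i ∈ Finset.Icc 1 m, ∑ j ∈ Finset.Icc 1 m,
          ((if ((i, j).1 - 1, (i, j).2) ∈ t then v else 0) +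
          (if ((i, j).1 + 1, (i, j).2) ∈ t then v else 0) +
          (if ((i, j).1, (i, j).2 - 1) ∈ t then v else 0) +
          (if ((i, j).1, (i, j).2 + 1) ∈ t then v else 0))
        = ∑ i ∈ Finset.Icc 1 m, ∑ j ∈ Finset.Icc 1 m,
          ((if 2 ≤ i then v else 0) + (if i + 1 ≤ m then v else 0) +
           (if 2 ≤ j then v else 0) + (if j + 1 ≤ m then v else 0)) := by
          refine Finset.sum_congr rfl fun i hi => Finset.sum_congr rfl fun j hj => ?_
          exact hterm i hi j hj
      _ = ∑ i ∈ Finset.Icc 1 m, ((m : ℝ) * ((if 2 ≤ i then v else 0) +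
            (if i + 1 ≤ m then v else 0)) + (((m : ℝ) - 1) * v + ((m : ℝ) - 1) * v)) := by
          refine Finset.sum_congr rfl fun i hi => ?_
          rw [Finset.sum_add_distrib, Finset.sum_add_distrib, Finset.sum_add_distrib,
            hsum2le v, hsumlt v, hconstsum ((if 2 ≤ i then v else 0)),
            hconstsum ((if i + 1 ≤ m then v else 0))]
          ring
      _ = 4 * (m : ℝ) * ((m : ℝ) - 1) * v := by
          rw [Finset.sum_add_distrib, ← Finset.mul_sum, Finset.sum_add_distrib, hsum2le v,
            hsumlt v, hconstsum (((m : ℝ) - 1) * v + ((m : ℝ) - 1) * v)]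
          ring
  -- E[S]
  have hES : ∫ ω, S ω = (m : ℝ) ^ 2 * p := by
    simp only [hS]
    rw [integral_finset_sum t fun q _ => hXint q]
    rw [Finset.sum_congr rfl fun q hq => hI1 q hq, Finset.sum_const, nsmul_eq_mul, hcard]
  -- E[S*S]
  have hESS : ∫ ω, S ω * S ω = (m : ℝ) ^ 2 * (m : ℝ) ^ 2 * p ^ 2 + (m : ℝ) ^ 2 * (p - p ^ 2) := by
    have hpt : ∀ ω, S ω * S ω = ∑ q ∈ t, ∑ r ∈ t, X q ω * X r ω := by
      intro ω
      simp only [hS]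
      rw [Finset.sum_mul_sum]
    rw [integral_congr_ae (Filter.Eventually.of_forall hpt)]
    rw [integral_finset_sum t fun q _ => integrable_finset_sum t fun r _ => hInt2 q r]
    have hinner : ∀ q ∈ t, ∫ ω, ∑ r ∈ t, X q ω * X r ω =
        (m : ℝ) ^ 2 * p ^ 2 + (p - p ^ 2) := by
      intro q hq
      rw [integral_finset_sum t fun r _ => hInt2 q r]
      have hval : ∀ r ∈ t, ∫ ω, X q ω * X r ω = p ^ 2 + (if r = q then p - p ^ 2 else 0) := by
        intro r hr
        by_cases hrq : r = q
        · subst hrq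
          have hsq : ∀ ω, X r ω * X r ω = X r ω := by
            intro ω
            rcases hXval r ω with h | h <;> rw [h] <;> ring
          rw [integral_congr_ae (Filter.Eventually.of_forall hsq), hI1 r hr, if_pos rfl]
          ring
        · rw [hI2 q hq r hr (fun h => hrq h.symm), if_neg hrq]
          ring
      rw [Finset.sum_congr rfl hval, Finset.sum_add_distrib, Finset.sum_const, nsmul_eq_mul,
        hcard, Finset.sum_ite_eq' t q fun _ => p - p ^ 2, if_pos hq]
    rw [Finset.sum_congr rfl hinner, Finset.sum_const, nsmul_eq_mul, hcard]
    ring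
  -- value of ∫ X q * X nb
  have hnbval : ∀ q ∈ t, ∀ nb : ℕ × ℕ, nb ≠ q → nb.1 ≤ m + 1 → nb.2 ≤ m + 1 →
      ∫ ω, X q ω * X nb ω = if nb ∈ t then p ^ 2 else 0 := by
    intro q hq nb hne h1 h2
    by_cases hnb : nb ∈ t
    · rw [if_pos hnb, hI2 q hq nb hnb (fun h => hne h.symm)]
    · rw [if_neg hnb]
      have hbd : nb.1 = 0 ∨ nb.1 = m + 1 ∨ nb.2 = 0 ∨ nb.2 = m + 1 := by
        have := hmem nb.1 nb.2
        rw [Prod.mk.eta] at this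
        rw [this] at hnb
        omega
      have : ∀ ω, X q ω * X nb ω = 0 := by
        intro ω
        rw [hXbd nb hbd ω, mul_zero]
      rw [integral_congr_ae (Filter.Eventually.of_forall this), integral_zero]
  -- E[T]
  have hterm_eq : ∀ q ∈ t, ∫ ω, X q ω * (X (q.1 - 1, q.2) ω + X (q.1 + 1, q.2) ω +
      X (q.1, q.2 - 1) ω + X (q.1, q.2 + 1) ω) =
      ((if (q.1 - 1, q.2) ∈ t then p ^ 2 else 0) + (if (q.1 + 1, q.2) ∈ t then p ^ 2 else 0) +
       (if (q.1, q.2 - 1) ∈ t then p ^ 2 else 0) + (if (q.1, q.2 + 1) ∈ t then p ^ 2 else 0)) := by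
    intro q hq
    have hqm := (by rw [← Prod.mk.eta (p := q)] at hq; exact (hmem q.1 q.2).1 hq :
      1 ≤ q.1 ∧ q.1 ≤ m ∧ 1 ≤ q.2 ∧ q.2 ≤ m)
    have hexp : ∀ ω, X q ω * (X (q.1 - 1, q.2) ω + X (q.1 + 1, q.2) ω +
        X (q.1, q.2 - 1) ω + X (q.1, q.2 + 1) ω) =
        X q ω * X (q.1 - 1, q.2) ω + X q ω * X (q.1 + 1, q.2) ω +
        X q ω * X (q.1, q.2 - 1) ω + X q ω * X (q.1, q.2 + 1) ω := by
      intro ω; ring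
    rw [integral_congr_ae (Filter.Eventually.of_forall hexp)]
    rw [integral_add (f := fun ω => X q ω * X (q.1 - 1, q.2) ω + X q ω * X (q.1 + 1, q.2) ω +
        X q ω * X (q.1, q.2 - 1) ω) (g := fun ω => X q ω * X (q.1, q.2 + 1) ω)
        (((hInt2 q _).add (hInt2 q _)).add (hInt2 q _)) (hInt2 q _),
      integral_add (f := fun ω => X q ω * X (q.1 - 1, q.2) ω + X q ω * X (q.1 + 1, q.2) ω)
        (g := fun ω => X q ω * X (q.1, q.2 - 1) ω)
        ((hInt2 q _).add (hInt2 q _)) (hInt2 q _),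
      integral_add (f := fun ω => X q ω * X (q.1 - 1, q.2) ω)
        (g := fun ω => X q ω * X (q.1 + 1, q.2) ω) (hInt2 q _) (hInt2 q _)]
    rw [hnbval q hq (q.1 - 1, q.2) (by simp [Prod.ext_iff]; omega) (by simp; omega) (by simp; omega),
      hnbval q hq (q.1 + 1, q.2) (by simp [Prod.ext_iff]) (by simp; omega) (by simp; omega),
      hnbval q hq (q.1, q.2 - 1) (by simp [Prod.ext_iff]; omega) (by simp; omega) (by simp; omega),
      hnbval q hq (q.1, q.2 + 1) (by simp [Prod.ext_iff]) (by simp; omega) (by simp; omega)]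
  have hET : ∫ ω, T ω = 4 * (m : ℝ) * ((m : ℝ) - 1) * p ^ 2 := by
    simp only [hT]
    rw [integral_finset_sum t fun q _ => htermint q]
    rw [Finset.sum_congr rfl hterm_eq, hcount (p ^ 2)]
  have hSInt3 : ∀ q r : ℕ × ℕ, Integrable (fun ω => S ω * (X q ω * X r ω)) ℙ := by
    intro q r
    refine hbdint _ ((t.card : ℝ) * 1) (hSmeas.mul ((hXmeas q).mul (hXmeas r))) fun ω => ?_
    rw [abs_mul]
    refine mul_le_mul (hSabs ω) ?_ (abs_nonneg _) (Nat.cast_nonneg _)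
    rw [abs_mul]
    calc |X q ω| * |X r ω| ≤ 1 * 1 :=
        mul_le_mul (hXabs q ω) (hXabs r ω) (abs_nonneg _) zero_le_one
      _ = 1 := by norm_num
  have hSnb : ∀ q ∈ t, ∀ r ∈ t, q ≠ r → ∫ ω, S ω * (X q ω * X r ω) =
      (m : ℝ) ^ 2 * p ^ 3 + 2 * (p ^ 2 - p ^ 3) := by
    intro q hq r hr hne
    have hpt : ∀ ω, S ω * (X q ω * X r ω) = ∑ kl ∈ t, X kl ω * (X q ω * X r ω) := by
      intro ω
      simp only [hS]
      rw [Finset.sum_mul]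
    rw [integral_congr_ae (Filter.Eventually.of_forall hpt),
      integral_finset_sum t fun kl _ => hInt3 kl q r]
    have hval : ∀ kl ∈ t, ∫ ω, X kl ω * (X q ω * X r ω) =
        p ^ 3 + (if kl = q then p ^ 2 - p ^ 3 else 0) + (if kl = r then p ^ 2 - p ^ 3 else 0) := by
      intro kl hkl
      by_cases hklq : kl = q
      · subst hklq
        have hpt2 : ∀ ω, X kl ω * (X kl ω * X r ω) = X kl ω * X r ω := by
          intro ω
          rcases hXval kl ω with h | h <;> rw [h] <;> ring
        rw [integral_congr_ae (Filter.Eventually.of_forall hpt2), hI2 kl hkl r hr hne,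
          if_pos rfl, if_neg (fun h => hne h)]
        ring
      · by_cases hklr : kl = r
        · subst hklr
          have hpt2 : ∀ ω, X kl ω * (X q ω * X kl ω) = X q ω * X kl ω := by
            intro ω
            rcases hXval kl ω with h | h <;> rw [h] <;> ring
          rw [integral_congr_ae (Filter.Eventually.of_forall hpt2), hI2 q hq kl hkl hne,
            if_neg hklq, if_pos rfl]
          ring
        · rw [hI3 kl hkl q hq r hr hklq hklr hne, if_neg hklq, if_neg hklr]
          ring
    rw [Finset.sum_congr rfl hval, Finset.sum_add_distrib, Finset.sum_add_distrib,
      Finset.sum_const, nsmul_eq_mul, hcard, Finset.sum_ite_eq' t q fun _ => p ^ 2 - p ^ 3,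
      Finset.sum_ite_eq' t r fun _ => p ^ 2 - p ^ 3, if_pos hq, if_pos hr]
    ring
  have hSdirval : ∀ q ∈ t, ∀ nb : ℕ × ℕ, nb ≠ q → nb.1 ≤ m + 1 → nb.2 ≤ m + 1 →
      ∫ ω, S ω * (X q ω * X nb ω) =
        if nb ∈ t then (m : ℝ) ^ 2 * p ^ 3 + 2 * (p ^ 2 - p ^ 3) else 0 := by
    intro q hq nb hne h1 h2
    by_cases hnb : nb ∈ t
    · rw [if_pos hnb, hSnb q hq nb hnb (fun h => hne h.symm)]
    · rw [if_neg hnb]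
      have hbd : nb.1 = 0 ∨ nb.1 = m + 1 ∨ nb.2 = 0 ∨ nb.2 = m + 1 := by
        have := hmem nb.1 nb.2
        rw [Prod.mk.eta] at this
        rw [this] at hnb
        omega
      have : ∀ ω, S ω * (X q ω * X nb ω) = 0 := by
        intro ω
        rw [hXbd nb hbd ω, mul_zero, mul_zero]
      rw [integral_congr_ae (Filter.Eventually.of_forall this), integral_zero]
  have hSterm_eq : ∀ q ∈ t, ∫ ω, S ω * (X q ω * (X (q.1 - 1, q.2) ω + X (q.1 + 1, q.2) ω +
      X (q.1, q.2 - 1) ω + X (q.1, q.2 + 1) ω)) =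
      ((if (q.1 - 1, q.2) ∈ t then (m : ℝ) ^ 2 * p ^ 3 + 2 * (p ^ 2 - p ^ 3) else 0) +
       (if (q.1 + 1, q.2) ∈ t then (m : ℝ) ^ 2 * p ^ 3 + 2 * (p ^ 2 - p ^ 3) else 0) +
       (if (q.1, q.2 - 1) ∈ t then (m : ℝ) ^ 2 * p ^ 3 + 2 * (p ^ 2 - p ^ 3) else 0) +
       (if (q.1, q.2 + 1) ∈ t then (m : ℝ) ^ 2 * p ^ 3 + 2 * (p ^ 2 - p ^ 3) else 0)) := by
    intro q hq
    have hqm := (by rw [← Prod.mk.eta (p := q)] at hq; exact (hmem q.1 q.2).1 hq :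
      1 ≤ q.1 ∧ q.1 ≤ m ∧ 1 ≤ q.2 ∧ q.2 ≤ m)
    have hexp : ∀ ω, S ω * (X q ω * (X (q.1 - 1, q.2) ω + X (q.1 + 1, q.2) ω +
        X (q.1, q.2 - 1) ω + X (q.1, q.2 + 1) ω)) =
        S ω * (X q ω * X (q.1 - 1, q.2) ω) + S ω * (X q ω * X (q.1 + 1, q.2) ω) +
        S ω * (X q ω * X (q.1, q.2 - 1) ω) + S ω * (X q ω * X (q.1, q.2 + 1) ω) := by
      intro ω; ring
    rw [integral_congr_ae (Filter.Eventually.of_forall hexp)]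
    rw [integral_add (f := fun ω => S ω * (X q ω * X (q.1 - 1, q.2) ω) +
        S ω * (X q ω * X (q.1 + 1, q.2) ω) + S ω * (X q ω * X (q.1, q.2 - 1) ω))
        (g := fun ω => S ω * (X q ω * X (q.1, q.2 + 1) ω))
        (((hSInt3 q _).add (hSInt3 q _)).add (hSInt3 q _)) (hSInt3 q _),
      integral_add (f := fun ω => S ω * (X q ω * X (q.1 - 1, q.2) ω) +
        S ω * (X q ω * X (q.1 + 1, q.2) ω))
        (g := fun ω => S ω * (X q ω * X (q.1, q.2 - 1) ω))
        ((hSInt3 q _).add (hSInt3 q _)) (hSInt3 q _),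
      integral_add (f := fun ω => S ω * (X q ω * X (q.1 - 1, q.2) ω))
        (g := fun ω => S ω * (X q ω * X (q.1 + 1, q.2) ω)) (hSInt3 q _) (hSInt3 q _)]
    rw [hSdirval q hq (q.1 - 1, q.2) (by simp [Prod.ext_iff]; omega) (by simp; omega)
        (by simp; omega),
      hSdirval q hq (q.1 + 1, q.2) (by simp [Prod.ext_iff]) (by simp; omega) (by simp; omega),
      hSdirval q hq (q.1, q.2 - 1) (by simp [Prod.ext_iff]; omega) (by simp; omega)
        (by simp; omega),
      hSdirval q hq (q.1, q.2 + 1) (by simp [Prod.ext_iff]) (by simp; omega) (by simp; omega)]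
  have hEST : ∫ ω, S ω * T ω = 4 * (m : ℝ) * ((m : ℝ) - 1) *
      ((m : ℝ) ^ 2 * p ^ 3 + 2 * (p ^ 2 - p ^ 3)) := by
    have hpt : ∀ ω, S ω * T ω = ∑ q ∈ t, S ω * (X q ω * (X (q.1 - 1, q.2) ω +
        X (q.1 + 1, q.2) ω + X (q.1, q.2 - 1) ω + X (q.1, q.2 + 1) ω)) := by
      intro ω
      simp only [hT]
      rw [Finset.mul_sum]
    rw [integral_congr_ae (Filter.Eventually.of_forall hpt),
      integral_finset_sum t fun q _ => hSterm_int q,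
      Finset.sum_congr rfl hSterm_eq, hcount ((m : ℝ) ^ 2 * p ^ 3 + 2 * (p ^ 2 - p ^ 3))]
  -- pointwise/a.e. forms of areaSum and perimSum
  have hAeq : ∀ᵐ ω ∂ℙ, areaSum m (fun i j => Z i j ω) = (1 / (m : ℝ)) * S ω := by
    refine haeq2.mono fun ω h => ?_
    simp only [areaSum, hS, ht]
    rw [Finset.sum_product]
    congr 1
    refine Finset.sum_congr rfl fun i hi => Finset.sum_congr rfl fun j hj => ?_
    rw [Finset.mem_Icc] at hi hj
    exact h i j (by omega) (by omega)
  have hPeq : ∀ᵐ ω ∂ℙ, perimSum m (fun i j => Z i j ω) =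
      (1 / (m : ℝ)) * (4 * S ω - T ω) := by
    refine haeq2.mono fun ω h => ?_
    simp only [perimSum]
    have hstep : ∀ i ∈ Finset.Icc 1 m, ∀ j ∈ Finset.Icc 1 m,
        (if Z i j ω = 1 then
          4 - (Z (i - 1) j ω + Z (i + 1) j ω + Z i (j - 1) ω + Z i (j + 1) ω) else 0) =
        4 * X (i, j) ω - X (i, j) ω * (X (i - 1, j) ω + X (i + 1, j) ω + X (i, j - 1) ω +
          X (i, j + 1) ω) := by
      intro i hi j hj
      rw [Finset.mem_Icc] at hi hj
      rw [h i j (by omega) (by omega), h (i - 1) j (by omega) (by omega),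
        h (i + 1) j (by omega) (by omega), h i (j - 1) (by omega) (by omega),
        h i (j + 1) (by omega) (by omega)]
      rcases hXval (i, j) ω with h0 | h1
      · rw [h0]
        norm_num
      · rw [h1, if_pos rfl]
        ring
    rw [Finset.sum_congr rfl fun i hi => Finset.sum_congr rfl fun j hj => hstep i hi j hj]
    congr 1
    simp only [hS, hT, ht]
    rw [Finset.sum_product, Finset.sum_product, Finset.mul_sum, ← Finset.sum_sub_distrib]
    refine Finset.sum_congr rfl fun i _ => ?_
    rw [Finset.mul_sum, ← Finset.sum_sub_distrib]
  -- values of the two inner integrals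
  have hIA : ∫ ω', areaSum m (fun i j => Z i j ω') ∂ℙ = (1 / (m : ℝ)) * ((m : ℝ) ^ 2 * p) := by
    rw [integral_congr_ae hAeq, integral_const_mul, hES]
  have hIP : ∫ ω', perimSum m (fun i j => Z i j ω') ∂ℙ =
      (1 / (m : ℝ)) * (4 * ((m : ℝ) ^ 2 * p) - 4 * (m : ℝ) * ((m : ℝ) - 1) * p ^ 2) := by
    rw [integral_congr_ae hPeq, integral_const_mul,
      integral_sub (hSint.const_mul 4) hTint, integral_const_mul, hES, hET]
  rw [hIA, hIP]
  set c : ℝ := 1 / (m : ℝ) with hc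
  set c1 : ℝ := c * ((m : ℝ) ^ 2 * p) with hc1
  set c2 : ℝ := c * (4 * ((m : ℝ) ^ 2 * p) - 4 * (m : ℝ) * ((m : ℝ) - 1) * p ^ 2) with hc2
  have houter : ∫ ω, (areaSum m (fun i j => Z i j ω) - c1) *
      (perimSum m (fun i j => Z i j ω) - c2) ∂ℙ =
      ∫ ω, (c * S ω - c1) * (c * (4 * S ω - T ω) - c2) ∂ℙ := by
    refine integral_congr_ae (((hAeq.and hPeq)).mono fun ω hw => ?_)
    simp only [hw.1, hw.2]
  rw [houter]
  have hexpand : ∫ ω, (c * S ω - c1) * (c * (4 * S ω - T ω) - c2) ∂ℙ =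
      ∫ ω, ((4 * (c * c)) * (S ω * S ω) - (c * c) * (S ω * T ω) -
        (c * c2 + 4 * c * c1) * S ω + ((c * c1) * T ω + c1 * c2)) ∂ℙ :=
    integral_congr_ae (Filter.Eventually.of_forall fun ω => by ring)
  rw [hexpand]
  rw [integral_add (f := fun ω => (4 * (c * c)) * (S ω * S ω) - (c * c) * (S ω * T ω) -
        (c * c2 + 4 * c * c1) * S ω) (g := fun ω => (c * c1) * T ω + c1 * c2)
      (((hSSint.const_mul _).sub (hSTint.const_mul _)).sub (hSint.const_mul _))
      ((hTint.const_mul _).add (integrable_const _)),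
    integral_sub (f := fun ω => (4 * (c * c)) * (S ω * S ω) - (c * c) * (S ω * T ω))
      (g := fun ω => (c * c2 + 4 * c * c1) * S ω)
      ((hSSint.const_mul _).sub (hSTint.const_mul _)) (hSint.const_mul _),
    integral_sub (f := fun ω => (4 * (c * c)) * (S ω * S ω))
      (g := fun ω => (c * c) * (S ω * T ω)) (hSSint.const_mul _) (hSTint.const_mul _),
    integral_add (f := fun ω => (c * c1) * T ω) (g := fun _ => c1 * c2)
      (hTint.const_mul _) (integrable_const _),
    integral_const_mul, integral_const_mul, integral_const_mul, integral_const_mul,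
    integral_const]
  simp only [measureReal_def, measure_univ, ENNReal.toReal_one, one_smul]
  rw [hESS, hEST, hES, hET, hc1, hc2, hc]
  have hM : (m : ℝ) ≠ 0 := Nat.cast_ne_zero.mpr (by omega)
  field_simp
  ring
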